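/- Assume Martin's Axiom and ¬CH. Let B be a Boolean algebra, A a Boolean subalgebra of B with |A| < 𝔠, and b ∈ B an element such that the set {a ∈ A : a ≤ b} is countable. Then every injective Boolean algebra homomorphism ψ : A → P(ω)/Fin extends to an injective Boolean algebra homomorphism from the Boolean subalgebra of B generated by A ∪ {b} into P(ω)/Fin. -/

import Mathlib

open Cardinal Set Filter Topology

/-- A preorder satisfies the countable chain condition if every set of pairwise
incompatible elements is countable. -/
def IsCCC (P : Type) [Preorder P] : Prop :=
  ∀ A : Set P, (∀ p ∈ A, ∀ q ∈ A, p ≠ q → ¬∃ r : P, r ≤ p ∧ r ≤ q) → A.Countable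

/-- A subset `D` of a preorder is dense if every element has a lower bound in `D`. -/
def DenseBelow {P : Type} [Preorder P] (D : Set P) : Prop :=
  ∀ p : P, ∃ d ∈ D, d ≤ p

/-- A filter on a preorder: nonempty, upward closed and downward directed. -/
def IsPosetFilter {P : Type} [Preorder P] (G : Set P) : Prop :=
  G.Nonempty ∧ (∀ p ∈ G, ∀ q : P, p ≤ q → q ∈ G) ∧
    ∀ p ∈ G, ∀ q ∈ G, ∃ r ∈ G, r ≤ p ∧ r ≤ q

/-- Martin's Axiom: for every nonempty ccc partial order and every family of fewer than
continuum many dense sets, there is a filter meeting all of them. -/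
def MartinsAxiom : Prop :=
  ∀ (P : Type) [PartialOrder P] [Nonempty P], IsCCC P →
    ∀ 𝒟 : Set (Set P), (∀ D ∈ 𝒟, DenseBelow D) → #𝒟 < Cardinal.continuum →
      ∃ G : Set P, IsPosetFilter G ∧ ∀ D ∈ 𝒟, (G ∩ D).Nonempty
/-- `P(ω)/Fin`: subsets of `ℕ` (as predicates) modulo the ideal of finite sets,
realized as germs of `Prop`-valued sequences along the cofinite filter. -/
abbrev PomegaFin : Type := Filter.Germ (Filter.cofinite : Filter ℕ) Prop

noncomputable instance : BooleanAlgebra PomegaFin where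
  compl := Filter.Germ.map (·ᶜ)
  inf_compl_le_bot a := a.inductionOn fun f => by
    change ((↑f : PomegaFin) ⊓ Filter.Germ.map _ _ : PomegaFin) ≤ (↑(⊥ : ℕ → Prop) : PomegaFin)
    rw [Filter.Germ.map_coe]
    refine Filter.Eventually.of_forall fun x => ?_
    simp [compl]
  top_le_sup_compl a := a.inductionOn fun f => by
    change (↑(⊤ : ℕ → Prop) : PomegaFin) ≤ ((↑f : PomegaFin) ⊔ Filter.Germ.map _ _ : PomegaFin)
    rw [Filter.Germ.map_coe]
    refine Filter.Eventually.of_forall fun x => ?_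
    by_cases h : f x <;> simp [compl, h]
  le_top a := le_top
  bot_le a := bot_le
/-- A subset of a Boolean algebra closed under the Boolean operations. -/
def IsBoolSubalgebra {B : Type*} [BooleanAlgebra B] (S : Set B) : Prop :=
  ⊥ ∈ S ∧ ⊤ ∈ S ∧ (∀ a ∈ S, ∀ b ∈ S, a ⊔ b ∈ S) ∧ (∀ a ∈ S, ∀ b ∈ S, a ⊓ b ∈ S) ∧
    ∀ a ∈ S, aᶜ ∈ S

/-- The smallest Boolean subalgebra containing `X`. -/
def boolGen {B : Type*} [BooleanAlgebra B] (X : Set B) : Set B :=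
  ⋂₀ {S : Set B | IsBoolSubalgebra S ∧ X ⊆ S}
/-- `f` is a Boolean algebra homomorphism on the subset `S`. -/
def IsBAHomOn {B T : Type*} [BooleanAlgebra B] [BooleanAlgebra T] (S : Set B) (f : B → T) :
    Prop :=
  f ⊥ = ⊥ ∧ f ⊤ = ⊤ ∧ (∀ a ∈ S, ∀ b ∈ S, f (a ⊔ b) = f a ⊔ f b) ∧
    (∀ a ∈ S, ∀ b ∈ S, f (a ⊓ b) = f a ⊓ f b) ∧ ∀ a ∈ S, f aᶜ = (f a)ᶜ

section BAlem
variable {β : Type*} [BooleanAlgebra β] (b : β)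

lemma pairH1 (z : β) : (z ⊓ b) ⊔ (z ⊓ bᶜ) = z := by
  rw [← inf_sup_left, sup_compl_eq_top, inf_top_eq]

lemma pairI1 (a₁ a₂ : β) : ((a₁ ⊓ b) ⊔ (a₂ ⊓ bᶜ)) ⊓ b = a₁ ⊓ b := by
  rw [inf_sup_right, inf_assoc, inf_assoc, compl_inf_eq_bot, inf_bot_eq, sup_bot_eq, inf_idem]

lemma pairI2 (a₁ a₂ : β) : ((a₁ ⊓ b) ⊔ (a₂ ⊓ bᶜ)) ⊓ bᶜ = a₂ ⊓ bᶜ := by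
  rw [inf_sup_right, inf_assoc, inf_assoc, inf_compl_eq_bot, inf_bot_eq, bot_sup_eq, inf_idem]

lemma pairEq {a₁ a₂ a₁' a₂' : β} :
    (a₁ ⊓ b) ⊔ (a₂ ⊓ bᶜ) = (a₁' ⊓ b) ⊔ (a₂' ⊓ bᶜ) ↔ a₁ ⊓ b = a₁' ⊓ b ∧ a₂ ⊓ bᶜ = a₂' ⊓ bᶜ := by
  constructor
  · intro h
    exact ⟨by rw [← pairI1 b a₁ a₂, h, pairI1], by rw [← pairI2 b a₁ a₂, h, pairI2]⟩
  · rintro ⟨h1, h2⟩; rw [h1, h2]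

lemma pairSup (a₁ a₂ a₁' a₂' : β) :
    ((a₁ ⊓ b) ⊔ (a₂ ⊓ bᶜ)) ⊔ ((a₁' ⊓ b) ⊔ (a₂' ⊓ bᶜ)) = ((a₁ ⊔ a₁') ⊓ b) ⊔ ((a₂ ⊔ a₂') ⊓ bᶜ) := by
  rw [inf_sup_right, inf_sup_right]
  ac_rfl

lemma infPair (a a' : β) : (a ⊓ b) ⊓ (a' ⊓ b) = (a ⊓ a') ⊓ b := by
  rw [show (a ⊓ b) ⊓ (a' ⊓ b) = (a ⊓ a') ⊓ (b ⊓ b) by ac_rfl, inf_idem]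

lemma pairInf (a₁ a₂ a₁' a₂' : β) :
    ((a₁ ⊓ b) ⊔ (a₂ ⊓ bᶜ)) ⊓ ((a₁' ⊓ b) ⊔ (a₂' ⊓ bᶜ)) = ((a₁ ⊓ a₁') ⊓ b) ⊔ ((a₂ ⊓ a₂') ⊓ bᶜ) := by
  set x := (a₁ ⊓ b) ⊔ (a₂ ⊓ bᶜ) with hx
  set y := (a₁' ⊓ b) ⊔ (a₂' ⊓ bᶜ) with hy
  have key : ∀ z : β, (x ⊓ y) ⊓ z = (x ⊓ z) ⊓ (y ⊓ z) := fun z => by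
    rw [show (x ⊓ z) ⊓ (y ⊓ z) = (x ⊓ y) ⊓ (z ⊓ z) by ac_rfl, inf_idem]
  calc x ⊓ y = ((x ⊓ y) ⊓ b) ⊔ ((x ⊓ y) ⊓ bᶜ) := (pairH1 b _).symm
    _ = ((a₁ ⊓ a₁') ⊓ b) ⊔ ((a₂ ⊓ a₂') ⊓ bᶜ) := by
        rw [key b, key bᶜ, hx, hy, pairI1, pairI1, pairI2, pairI2, infPair, infPair]

lemma pairCompl (a₁ a₂ : β) :
    ((a₁ ⊓ b) ⊔ (a₂ ⊓ bᶜ))ᶜ = (a₁ᶜ ⊓ b) ⊔ (a₂ᶜ ⊓ bᶜ) := by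
  apply compl_unique
  · rw [pairInf, inf_compl_eq_bot, inf_compl_eq_bot, bot_inf_eq, bot_inf_eq, sup_idem]
  · rw [pairSup, sup_compl_eq_top, sup_compl_eq_top, top_inf_eq, top_inf_eq, sup_compl_eq_top]

lemma le_of_inf_compl_eq_bot {x c : β} (h : x ⊓ cᶜ = ⊥) : x ≤ c := by
  have := pairH1 c x
  rw [h, sup_bot_eq] at this
  rw [← this]; exact inf_le_right

lemma st10_inf_compl_eq_bot {x c : β} (h : x ≤ c) : x ⊓ cᶜ = ⊥ :=
  le_bot_iff.mp (le_trans (inf_le_inf_right _ h) (by rw [inf_compl_eq_bot]))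

end BAlem
section Gen
variable {β : Type*} [BooleanAlgebra β]

lemma boolGen_subalg (X : Set β) : IsBoolSubalgebra (boolGen X) := by
  refine ⟨?_, ?_, ?_, ?_, ?_⟩
  · exact fun S hS => hS.1.1
  · exact fun S hS => hS.1.2.1
  · intro a ha c hc S hS
    exact hS.1.2.2.1 a (ha S hS) c (hc S hS)
  · intro a ha c hc S hS
    exact hS.1.2.2.2.1 a (ha S hS) c (hc S hS)
  · intro a ha S hS
    exact hS.1.2.2.2.2 a (ha S hS)

lemma subset_boolGen (X : Set β) : X ⊆ boolGen X := fun x hx S hS => hS.2 hx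

lemma boolGen_subset {X S : Set β} (hS : IsBoolSubalgebra S) (h : X ⊆ S) : boolGen X ⊆ S :=
  fun _x hx => hx S ⟨hS, h⟩

/-- The set of elements of the form `(a₁ ⊓ b) ⊔ (a₂ ⊓ bᶜ)` with `a₁, a₂ ∈ A`. -/
def pairSet (A : Set β) (b : β) : Set β :=
  {x | ∃ a₁ ∈ A, ∃ a₂ ∈ A, x = (a₁ ⊓ b) ⊔ (a₂ ⊓ bᶜ)}

lemma pairSet_subalg {A : Set β} (hA : IsBoolSubalgebra A) (b : β) :
    IsBoolSubalgebra (pairSet A b) := by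
  obtain ⟨hbot, htop, hsup, hinf, hcompl⟩ := hA
  refine ⟨⟨⊥, hbot, ⊥, hbot, by simp⟩, ⟨⊤, htop, ⊤, htop, by rw [pairH1]⟩, ?_, ?_, ?_⟩
  · rintro _ ⟨a₁, h₁, a₂, h₂, rfl⟩ _ ⟨a₁', h₁', a₂', h₂', rfl⟩
    exact ⟨a₁ ⊔ a₁', hsup _ h₁ _ h₁', a₂ ⊔ a₂', hsup _ h₂ _ h₂', (pairSup b _ _ _ _)⟩
  · rintro _ ⟨a₁, h₁, a₂, h₂, rfl⟩ _ ⟨a₁', h₁', a₂', h₂', rfl⟩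
    exact ⟨a₁ ⊓ a₁', hinf _ h₁ _ h₁', a₂ ⊓ a₂', hinf _ h₂ _ h₂', (pairInf b _ _ _ _)⟩
  · rintro _ ⟨a₁, h₁, a₂, h₂, rfl⟩
    exact ⟨a₁ᶜ, hcompl _ h₁, a₂ᶜ, hcompl _ h₂, (pairCompl b _ _)⟩

lemma boolGen_eq_pairSet {A : Set β} (hA : IsBoolSubalgebra A) (b : β) :
    boolGen (A ∪ {b}) = pairSet A b := by
  apply le_antisymm
  · apply boolGen_subset (pairSet_subalg hA b)
    rintro x (hx | rfl)
    · exact ⟨x, hx, x, hx, (pairH1 b x).symm⟩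
    · exact ⟨⊤, hA.2.1, ⊥, hA.1, by simp⟩
  · rintro _ ⟨a₁, h₁, a₂, h₂, rfl⟩
    have hg := boolGen_subalg (A ∪ {b} : Set β)
    have hb : b ∈ boolGen (A ∪ {b}) := subset_boolGen _ (Or.inr rfl)
    have hA' : ∀ a ∈ A, a ∈ boolGen (A ∪ {b}) := fun a ha => subset_boolGen _ (Or.inl ha)
    exact hg.2.2.1 _ (hg.2.2.2.1 _ (hA' _ h₁) _ hb) _
      (hg.2.2.2.1 _ (hA' _ h₂) _ (hg.2.2.2.2 _ hb))
end Gen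
open scoped Classical

section Poset
variable {B : Type} [BooleanAlgebra B]

/-- Forcing conditions for constructing the separating element. -/
@[ext] structure Cond (A : Set B) (b : B) (S : B → ℕ → Prop) : Type where
  s : Finset ℕ
  n : ℕ
  F : Finset B
  G : Finset B
  hs : ∀ m ∈ s, m < n
  hF : ∀ u ∈ F, u ∈ A ∧ b ≤ u
  hG : ∀ g ∈ G, g ∈ A ∧ g ≤ b
  hcl : ∀ g ∈ G, ∀ u ∈ F, ∀ m : ℕ, S g m → ¬ S u m → m < n

variable {A : Set B} {b : B} {S : B → ℕ → Prop}

instance : PartialOrder (Cond A b S) where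
  le q p := p.n ≤ q.n ∧ p.F ⊆ q.F ∧ p.G ⊆ q.G ∧ (∀ m, m < p.n → (m ∈ q.s ↔ m ∈ p.s)) ∧
    (∀ m ∈ q.s, m ∉ p.s → ∀ u ∈ p.F, S u m) ∧
    (∀ g ∈ p.G, ∀ m : ℕ, p.n ≤ m → m < q.n → S g m → m ∈ q.s)
  le_refl p := by
    refine ⟨le_refl _, subset_rfl, subset_rfl, fun m _ => Iff.rfl, fun m hm hm' => absurd hm hm', ?_⟩
    intro g hg m h1 h2 _
    exact absurd (lt_of_le_of_lt h1 h2) (lt_irrefl p.n)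
  le_trans r q p hrq hqp := by
    obtain ⟨hn1, hF1, hG1, ha1, hnew1, hfo1⟩ := hrq
    obtain ⟨hn2, hF2, hG2, ha2, hnew2, hfo2⟩ := hqp
    refine ⟨le_trans hn2 hn1, subset_trans hF2 hF1, subset_trans hG2 hG1, ?_, ?_, ?_⟩
    · intro m hm
      rw [ha1 m (lt_of_lt_of_le hm hn2), ha2 m hm]
    · intro m hm hm' u hu
      by_cases hq : m ∈ q.s
      · exact hnew2 m hq hm' u hu
      · exact hnew1 m hm hq u (hF2 hu)
    · intro g hg m h1 h2 hS
      by_cases hq : m < q.n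
      · have := hfo2 g hg m h1 hq hS
        exact (ha1 m hq).mpr this
      · exact hfo1 g (hG2 hg) m (le_of_not_gt hq) h2 hS
  le_antisymm p q hpq hqp := by
    have hn : q.n = p.n := le_antisymm hpq.1 hqp.1
    have hF : q.F = p.F := Finset.Subset.antisymm hpq.2.1 hqp.2.1
    have hG : q.G = p.G := Finset.Subset.antisymm hpq.2.2.1 hqp.2.2.1
    have hs : p.s = q.s := by
      apply Finset.ext
      intro m
      constructor
      · intro hm
        exact (hqp.2.2.2.1 m (p.hs m hm)).mpr hm
      · intro hm
        exact (hpq.2.2.2.1 m (q.hs m hm)).mpr hm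
    exact Cond.ext hs (hn.symm) (hF.symm) (hG.symm)

lemma Cond.le_def {q p : Cond A b S} : q ≤ p ↔
    (p.n ≤ q.n ∧ p.F ⊆ q.F ∧ p.G ⊆ q.G ∧ (∀ m, m < p.n → (m ∈ q.s ↔ m ∈ p.s)) ∧
    (∀ m ∈ q.s, m ∉ p.s → ∀ u ∈ p.F, S u m) ∧
    (∀ g ∈ p.G, ∀ m : ℕ, p.n ≤ m → m < q.n → S g m → m ∈ q.s)) := Iff.rfl

/-- Raising the ceiling of a condition. -/
lemma Cond.raise (p : Cond A b S) (N : ℕ) :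
    ∃ q : Cond A b S, q ≤ p ∧ q.n = max N p.n ∧ q.F = p.F ∧ q.G = p.G ∧
      (∀ m : ℕ, m ∈ q.s ↔ m ∈ p.s ∨ (p.n ≤ m ∧ m < max N p.n ∧ ∃ g ∈ p.G, S g m)) := by
  refine ⟨⟨p.s ∪ (Finset.range (max N p.n)).filter
      (fun m => p.n ≤ m ∧ ∃ g ∈ p.G, S g m), max N p.n, p.F, p.G, ?_, p.hF, p.hG, ?_⟩,
      ?_, rfl, rfl, rfl, ?_⟩
  · intro m hm
    rcases Finset.mem_union.mp hm with h | h
    · exact lt_of_lt_of_le (p.hs m h) (le_max_right _ _)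
    · exact Finset.mem_range.mp (Finset.mem_filter.mp h).1
  · intro g hg u hu m h1 h2
    exact lt_of_lt_of_le (p.hcl g hg u hu m h1 h2) (le_max_right _ _)
  · refine ⟨le_max_right _ _, subset_rfl, subset_rfl, ?_, ?_, ?_⟩
    · intro m hm
      simp only [Finset.mem_union, Finset.mem_filter, Finset.mem_range]
      constructor
      · rintro (h | ⟨_, h2, _⟩)
        · exact h
        · exact absurd hm (not_lt_of_ge h2)
      · exact Or.inl
    · intro m hm hm' u hu
      rcases Finset.mem_union.mp hm with h | h
      · exact absurd h hm'
      · obtain ⟨_, h1, g, hg, hSg⟩ := Finset.mem_filter.mp h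
        by_contra hSu
        exact absurd (p.hcl g hg u hu m hSg hSu) (not_lt_of_ge h1)
    · intro g hg m h1 h2 hS
      exact Finset.mem_union.mpr (Or.inr (Finset.mem_filter.mpr
        ⟨Finset.mem_range.mpr h2, h1, g, hg, hS⟩))
  · intro m
    simp only [Finset.mem_union, Finset.mem_filter, Finset.mem_range]
    constructor
    · rintro (h | ⟨h1, h2, h3⟩)
      · exact Or.inl h
      · exact Or.inr ⟨h2, h1, h3⟩
    · rintro (h | ⟨h1, h2, h3⟩)
      · exact Or.inl h
      · exact Or.inr ⟨h2, h1, h3⟩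
end Poset
section Poset2
variable {B : Type} [BooleanAlgebra B] {A : Set B} {b : B} {S : B → ℕ → Prop}

lemma Cond.addF (p : Cond A b S) (u : B) (hu : u ∈ A ∧ b ≤ u)
    (hcnd : ∀ g ∈ p.G, ∀ m : ℕ, S g m → ¬ S u m → m < p.n) :
    ∃ q : Cond A b S, q ≤ p ∧ u ∈ q.F := by
  refine ⟨⟨p.s, p.n, insert u p.F, p.G, p.hs, ?_, p.hG, ?_⟩, ?_, Finset.mem_insert_self u p.F⟩
  · intro v hv
    rcases Finset.mem_insert.mp hv with rfl | hv
    · exact hu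
    · exact p.hF v hv
  · intro g hg v hv m h1 h2
    rcases Finset.mem_insert.mp hv with rfl | hv
    · exact hcnd g hg m h1 h2
    · exact p.hcl g hg v hv m h1 h2
  · exact ⟨le_refl _, Finset.subset_insert u p.F, subset_rfl, fun m _ => Iff.rfl,
      fun m hm hm' => absurd hm hm',
      fun g hg m h1 h2 _ => absurd (lt_of_le_of_lt h1 h2) (lt_irrefl p.n)⟩

lemma Cond.addG (p : Cond A b S) (g : B) (hg : g ∈ A ∧ g ≤ b)
    (hcnd : ∀ u ∈ p.F, ∀ m : ℕ, S g m → ¬ S u m → m < p.n) :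
    ∃ q : Cond A b S, q ≤ p ∧ g ∈ q.G := by
  refine ⟨⟨p.s, p.n, p.F, insert g p.G, p.hs, p.hF, ?_, ?_⟩, ?_, Finset.mem_insert_self g p.G⟩
  · intro h hh
    rcases Finset.mem_insert.mp hh with rfl | hh
    · exact hg
    · exact p.hG h hh
  · intro h hh v hv m h1 h2
    rcases Finset.mem_insert.mp hh with rfl | hh
    · exact hcnd v hv m h1 h2
    · exact p.hcl h hh v hv m h1 h2
  · exact ⟨le_refl _, subset_rfl, Finset.subset_insert g p.G, fun m _ => Iff.rfl,
      fun m hm hm' => absurd hm hm',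
      fun g hg m h1 h2 _ => absurd (lt_of_le_of_lt h1 h2) (lt_irrefl p.n)⟩

lemma Cond.addPt (p : Cond A b S) (m : ℕ) (hm : p.n ≤ m) (hSm : ∀ u ∈ p.F, S u m) :
    ∃ q : Cond A b S, q ≤ p ∧ m ∈ q.s := by
  obtain ⟨q, hqp, hqn, hqF, hqG, hqs⟩ := p.raise (m + 1)
  obtain ⟨hn, hF, hG, ha, hnew, hfo⟩ := hqp
  have hmn : m < q.n := by
    rw [hqn]; exact lt_of_lt_of_le (Nat.lt_succ_self m) (le_max_left _ _)
  refine ⟨⟨insert m q.s, q.n, q.F, q.G, ?_, q.hF, q.hG, q.hcl⟩, ?_,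
    Finset.mem_insert_self m q.s⟩
  · intro x hx
    rcases Finset.mem_insert.mp hx with rfl | hx
    · exact hmn
    · exact q.hs x hx
  · refine ⟨hn, hF, hG, ?_, ?_, ?_⟩
    · intro x hx
      rw [Finset.mem_insert]
      constructor
      · rintro (rfl | h)
        · exact absurd hx (not_lt_of_ge hm)
        · exact (ha x hx).mp h
      · intro h
        exact Or.inr ((ha x hx).mpr h)
    · intro x hx hx' u hu
      rcases Finset.mem_insert.mp hx with rfl | hx
      · exact hSm u hu
      · exact hnew x hx hx' u hu
    · intro g hg x h1 h2 hS
      exact Finset.mem_insert.mpr (Or.inr (hfo g hg x h1 h2 hS))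

/-- The combined dense set. -/
def Dset (A : Set B) (b : B) (S : B → ℕ → Prop) (a : B) (k : ℕ) : Set (Cond A b S) :=
  {p | (a ∈ A ∧ b ≤ a → a ∈ p.F) ∧ (a ∈ A ∧ a ≤ b → a ∈ p.G) ∧ k ≤ p.n ∧
    (a ∈ A ∧ a ⊓ b ≠ ⊥ → ∃ m : ℕ, k ≤ m ∧ m ∈ p.s ∧ S a m) ∧
    (a ∈ A ∧ ¬ a ≤ b → ∃ m : ℕ, k ≤ m ∧ m < p.n ∧ S a m ∧ m ∉ p.s)}

lemma Dset_persist {a : B} {k : ℕ} {p q : Cond A b S} (hqp : q ≤ p)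
    (hp : p ∈ Dset A b S a k) : q ∈ Dset A b S a k := by
  obtain ⟨h1, h2, h3, h4, h5⟩ := hp
  obtain ⟨hn, hF, hG, ha, _, _⟩ := hqp
  refine ⟨fun h => hF (h1 h), fun h => hG (h2 h), le_trans h3 hn, ?_, ?_⟩
  · intro h
    obtain ⟨m, hk, hms, hSa⟩ := h4 h
    exact ⟨m, hk, (ha m (p.hs m hms)).mpr hms, hSa⟩
  · intro h
    obtain ⟨m, hk, hmn, hSa, hms⟩ := h5 h
    exact ⟨m, hk, lt_of_lt_of_le hmn hn, hSa, fun hq => hms ((ha m hmn).mp hq)⟩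
end Poset2
section GermLem

lemma germ_le_iff (f g : ℕ → Prop) : (↑f : PomegaFin) ≤ ↑g ↔ {n | f n ∧ ¬ g n}.Finite := by
  rw [Filter.Germ.coe_le]
  constructor
  · intro h
    refine (Filter.eventually_cofinite.mp (h.mono (fun n hn => hn))).subset ?_
    intro n hn
    simp only [Set.mem_setOf_eq, le_Prop_eq] at *
    tauto
  · intro h
    refine Filter.eventually_cofinite.mpr (h.subset ?_)
    intro n hn
    simp only [Set.mem_setOf_eq, le_Prop_eq] at *
    tauto

lemma germ_eq_bot_iff (f : ℕ → Prop) : (↑f : PomegaFin) = ⊥ ↔ {n | f n}.Finite := by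
  rw [le_bot_iff.symm, show (⊥ : PomegaFin) = ↑(fun _ : ℕ => False) from rfl, germ_le_iff]
  simp

lemma germ_ne_bot_iff (f : ℕ → Prop) : (↑f : PomegaFin) ≠ ⊥ ↔ {n | f n}.Infinite := by
  rw [Ne, germ_eq_bot_iff]; rfl

lemma unbounded_of_infinite {T : Set ℕ} (h : T.Infinite) : ∀ k, ∃ m, k ≤ m ∧ m ∈ T := by
  intro k
  obtain ⟨m, hm⟩ := (h.diff (Set.finite_lt_nat k)).nonempty
  exact ⟨m, le_of_not_gt hm.2, hm.1⟩

lemma infinite_of_unbounded {T : Set ℕ} (h : ∀ k, ∃ m, k ≤ m ∧ m ∈ T) : T.Infinite := by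
  intro hfin
  obtain ⟨N, hN⟩ := hfin.bddAbove
  obtain ⟨m, hm, hmT⟩ := h (N + 1)
  exact absurd (hN hmT) (not_le_of_gt (lt_of_lt_of_le (Nat.lt_succ_self N) hm))

lemma bound_of_finite {T : Set ℕ} (h : T.Finite) : ∃ N, ∀ m ∈ T, m < N := by
  obtain ⟨N, hN⟩ := h.bddAbove
  exact ⟨N + 1, fun m hm => Nat.lt_succ_of_le (hN hm)⟩

end GermLem

section PsiLem
variable {B : Type} [BooleanAlgebra B] {A : Set B} {ψ : B → PomegaFin}

lemma psi_mono (hψ : IsBAHomOn A ψ) {a a' : B} (ha : a ∈ A) (ha' : a' ∈ A) (h : a ≤ a') :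
    ψ a ≤ ψ a' := by
  have heq : a ⊓ a' = a := inf_eq_left.mpr h
  calc ψ a = ψ (a ⊓ a') := by rw [heq]
    _ = ψ a ⊓ ψ a' := hψ.2.2.2.1 a ha a' ha'
    _ ≤ ψ a' := inf_le_right

lemma psi_ne_bot (hA : IsBoolSubalgebra A) (hψ : IsBAHomOn A ψ) (hψinj : Set.InjOn ψ A)
    {a : B} (ha : a ∈ A) (h : a ≠ ⊥) : ψ a ≠ ⊥ := by
  intro hb
  exact h (hψinj ha hA.1 (by rw [hb, hψ.1]))

lemma finsetInf_mem (hA : IsBoolSubalgebra A) :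
    ∀ F : Finset B, (∀ u ∈ F, u ∈ A) → F.inf id ∈ A := by
  classical
  intro F
  induction F using Finset.induction_on with
  | empty => intro _; simpa using hA.2.1
  | insert _ _ hx ih =>
    intro h
    rw [Finset.inf_insert]
    exact hA.2.2.2.1 _ (h _ (Finset.mem_insert_self _ _))
      _ (ih (fun u hu => h u (Finset.mem_insert_of_mem hu)))

lemma finsetSup_mem (hA : IsBoolSubalgebra A) :
    ∀ F : Finset B, (∀ u ∈ F, u ∈ A) → F.sup id ∈ A := by
  classical
  intro F
  induction F using Finset.induction_on with
  | empty => intro _; simpa using hA.1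
  | insert _ _ hx ih =>
    intro h
    rw [Finset.sup_insert]
    exact hA.2.2.1 _ (h _ (Finset.mem_insert_self _ _))
      _ (ih (fun u hu => h u (Finset.mem_insert_of_mem hu)))

lemma germ_finsetInf (hA : IsBoolSubalgebra A) (hψ : IsBAHomOn A ψ)
    (S : B → ℕ → Prop) (hS : ∀ a, (↑(S a) : PomegaFin) = ψ a) :
    ∀ F : Finset B, (∀ u ∈ F, u ∈ A) →
      (↑(fun m => ∀ u ∈ F, S u m) : PomegaFin) = ψ (F.inf id) := by
  classical
  intro F
  induction F using Finset.induction_on with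
  | empty =>
    intro _
    rw [Finset.inf_empty, hψ.2.1]
    show _ = (↑(fun _ : ℕ => True) : PomegaFin)
    apply Filter.Germ.coe_eq.mpr
    exact Filter.Eventually.of_forall fun m => propext (by simp)
  | @insert v F hx ih =>
    intro h
    have hv : v ∈ A := h _ (Finset.mem_insert_self _ _)
    have hF : ∀ u ∈ F, u ∈ A := fun u hu => h u (Finset.mem_insert_of_mem hu)
    have step : (↑(fun m => ∀ u ∈ insert v F, S u m) : PomegaFin)
        = ↑(S v) ⊓ ↑(fun m => ∀ u ∈ F, S u m) := by
      have hrfl : ((↑(S v) ⊓ ↑(fun m => ∀ u ∈ F, S u m)) : PomegaFin)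
          = ↑(fun m => S v m ∧ ∀ u ∈ F, S u m) := rfl
      rw [hrfl]
      apply Filter.Germ.coe_eq.mpr
      exact Filter.Eventually.of_forall fun m => propext (by simp)
    rw [step, ih hF, hS v, Finset.inf_insert, id_eq,
      hψ.2.2.2.1 v hv _ (finsetInf_mem hA F hF)]

lemma germ_finsetSup (hA : IsBoolSubalgebra A) (hψ : IsBAHomOn A ψ)
    (S : B → ℕ → Prop) (hS : ∀ a, (↑(S a) : PomegaFin) = ψ a) :
    ∀ F : Finset B, (∀ u ∈ F, u ∈ A) →
      (↑(fun m => ∃ u ∈ F, S u m) : PomegaFin) = ψ (F.sup id) := by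
  classical
  intro F
  induction F using Finset.induction_on with
  | empty =>
    intro _
    rw [Finset.sup_empty, hψ.1]
    show _ = (↑(fun _ : ℕ => False) : PomegaFin)
    apply Filter.Germ.coe_eq.mpr
    exact Filter.Eventually.of_forall fun m => propext (by simp)
  | @insert v F hx ih =>
    intro h
    have hv : v ∈ A := h _ (Finset.mem_insert_self _ _)
    have hF : ∀ u ∈ F, u ∈ A := fun u hu => h u (Finset.mem_insert_of_mem hu)
    have step : (↑(fun m => ∃ u ∈ insert v F, S u m) : PomegaFin)
        = ↑(S v) ⊔ ↑(fun m => ∃ u ∈ F, S u m) := by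
      have hrfl : ((↑(S v) ⊔ ↑(fun m => ∃ u ∈ F, S u m)) : PomegaFin)
          = ↑(fun m => S v m ∨ ∃ u ∈ F, S u m) := rfl
      rw [hrfl]
      apply Filter.Germ.coe_eq.mpr
      exact Filter.Eventually.of_forall fun m => propext (by simp)
    rw [step, ih hF, hS v, Finset.sup_insert, id_eq,
      hψ.2.2.1 v hv _ (finsetSup_mem hA F hF)]
end PsiLem
section CCC
variable {B : Type} [BooleanAlgebra B] {A : Set B} {b : B} {S : B → ℕ → Prop}

lemma cond_compat {p q : Cond A b S} (hs : p.s = q.s) (hn : p.n = q.n) (hG : p.G = q.G) :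
    ∃ r : Cond A b S, r ≤ p ∧ r ≤ q := by
  classical
  refine ⟨⟨p.s, p.n, p.F ∪ q.F, p.G, p.hs, ?_, p.hG, ?_⟩, ?_, ?_⟩
  · intro u hu
    rcases Finset.mem_union.mp hu with h | h
    · exact p.hF u h
    · exact q.hF u h
  · intro g hg u hu m h1 h2
    rcases Finset.mem_union.mp hu with h | h
    · exact p.hcl g hg u h m h1 h2
    · rw [hn]
      exact q.hcl g (hG ▸ hg) u h m h1 h2
  · exact ⟨le_refl _, Finset.subset_union_left, subset_rfl, fun m _ => Iff.rfl,
      fun m hm hm' => absurd hm hm',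
      fun g hg m h1 h2 _ => absurd (lt_of_le_of_lt h1 h2) (lt_irrefl p.n)⟩
  · refine ⟨le_of_eq hn.symm, Finset.subset_union_right, le_of_eq hG.symm, ?_, ?_, ?_⟩
    · intro m _; rw [hs]
    · intro m hm hm'
      rw [hs] at hm
      exact absurd hm hm'
    · intro g hg m h1 h2 _
      rw [hn] at h2
      exact absurd (lt_of_le_of_lt h1 h2) (lt_irrefl q.n)

lemma cond_ccc (hb : ({a ∈ A | a ≤ b}).Countable) : IsCCC (Cond A b S) := by
  intro An hAn
  have hinj : Set.InjOn (fun p : Cond A b S => (p.s, p.n, p.G)) An := by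
    intro p hp q hq hpq
    by_contra hne
    obtain ⟨h1, h2, h3⟩ : p.s = q.s ∧ p.n = q.n ∧ p.G = q.G := by
      rw [Prod.ext_iff, Prod.ext_iff] at hpq
      exact ⟨hpq.1, hpq.2.1, hpq.2.2⟩
    exact hAn p hp q hq hne (cond_compat h1 h2 h3)
  apply Set.countable_of_injective_of_countable_image hinj
  have hsub : (fun p : Cond A b S => (p.s, p.n, p.G)) '' An ⊆
      (Set.univ : Set (Finset ℕ)) ×ˢ ((Set.univ : Set ℕ) ×ˢ
        {G : Finset B | ↑G ⊆ {a ∈ A | a ≤ b}}) := by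
    rintro _ ⟨p, _, rfl⟩
    refine ⟨trivial, trivial, ?_⟩
    intro g hg
    exact p.hG g (by exact_mod_cast hg)
  refine Set.Countable.mono hsub ?_
  refine Set.Countable.prod (Set.countable_univ) (Set.Countable.prod (Set.countable_univ) ?_)
  have : {G : Finset B | ↑G ⊆ {a ∈ A | a ≤ b}} ⊆
      (fun G : Finset B => (↑G : Set B)) ⁻¹' {t : Set B | t.Finite ∧ t ⊆ {a ∈ A | a ≤ b}} := by
    intro G hG
    exact ⟨G.finite_toSet, hG⟩
  exact Set.Countable.mono this
    ((Set.countable_setOf_finite_subset hb).preimage Finset.coe_injective)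

instance : Nonempty (Cond A b S) :=
  ⟨⟨∅, 0, ∅, ∅, by simp, by simp, by simp, by simp⟩⟩
end CCC
section Dense
variable {B : Type} [BooleanAlgebra B] {A : Set B} {b : B} {S : B → ℕ → Prop}

lemma Cond.le_F {q p : Cond A b S} (h : q ≤ p) {u : B} (hu : u ∈ p.F) : u ∈ q.F := h.2.1 hu
lemma Cond.le_G {q p : Cond A b S} (h : q ≤ p) {g : B} (hg : g ∈ p.G) : g ∈ q.G := h.2.2.1 hg
lemma Cond.le_n {q p : Cond A b S} (h : q ≤ p) : p.n ≤ q.n := h.1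
lemma Cond.le_pt {q p : Cond A b S} (h : q ≤ p) {m : ℕ} (hm : m ∈ p.s) : m ∈ q.s :=
  (h.2.2.2.1 m (p.hs m hm)).mpr hm
lemma Cond.le_npt {q p : Cond A b S} (h : q ≤ p) {m : ℕ} (hmn : m < p.n) (hm : m ∉ p.s) :
    m ∉ q.s := fun hq => hm ((h.2.2.2.1 m hmn).mp hq)

lemma cond_dense {ψ : B → PomegaFin}
    (hA : IsBoolSubalgebra A) (hψ : IsBAHomOn A ψ) (hψinj : Set.InjOn ψ A)
    (hS : ∀ x, (↑(S x) : PomegaFin) = ψ x)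
    (a : B) (k : ℕ) : DenseBelow (Dset A b S a k) := by
  classical
  intro p
  have hexc : ∀ v ∈ A, ∀ H : Finset B, (∀ g ∈ H, g ∈ A ∧ g ≤ v) →
      ∃ N, ∀ g ∈ H, ∀ m : ℕ, S g m → ¬ S v m → m < N := by
    intro v hv H hH
    have hfin : (⋃ g ∈ H, {m | S g m ∧ ¬ S v m}).Finite := by
      apply Set.Finite.biUnion H.finite_toSet
      intro g hg
      have hle : ψ g ≤ ψ v := psi_mono hψ (hH g hg).1 hv (hH g hg).2
      rw [← hS g, ← hS v, germ_le_iff] at hle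
      exact hle
    obtain ⟨N, hN⟩ := bound_of_finite hfin
    exact ⟨N, fun g hg m h1 h2 => hN m (Set.mem_biUnion hg ⟨h1, h2⟩)⟩
  have hexc2 : ∀ g₀ ∈ A, ∀ H : Finset B, (∀ u ∈ H, u ∈ A ∧ g₀ ≤ u) →
      ∃ N, ∀ u ∈ H, ∀ m : ℕ, S g₀ m → ¬ S u m → m < N := by
    intro g₀ hg₀ H hH
    have hfin : (⋃ u ∈ H, {m | S g₀ m ∧ ¬ S u m}).Finite := by
      apply Set.Finite.biUnion H.finite_toSet
      intro u hu
      have hle : ψ g₀ ≤ ψ u := psi_mono hψ hg₀ (hH u hu).1 (hH u hu).2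
      rw [← hS g₀, ← hS u, germ_le_iff] at hle
      exact hle
    obtain ⟨N, hN⟩ := bound_of_finite hfin
    exact ⟨N, fun u hu m h1 h2 => hN m (Set.mem_biUnion hu ⟨h1, h2⟩)⟩
  -- Step 1: put `a` into `F` if appropriate
  obtain ⟨q1, hq1, hq1F⟩ : ∃ q1 : Cond A b S, q1 ≤ p ∧ (a ∈ A ∧ b ≤ a → a ∈ q1.F) := by
    by_cases hba : a ∈ A ∧ b ≤ a
    · obtain ⟨N, hN⟩ := hexc a hba.1 p.G
        (fun g hg => ⟨(p.hG g hg).1, le_trans (p.hG g hg).2 hba.2⟩)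
      obtain ⟨q0, hq0, hq0n, hq0F, hq0G, _⟩ := p.raise N
      obtain ⟨q1, hq1, hmem⟩ := q0.addF a hba (by
        intro g hg m h1 h2
        rw [hq0G] at hg
        calc m < N := hN g hg m h1 h2
          _ ≤ q0.n := by rw [hq0n]; exact le_max_left _ _)
      exact ⟨q1, le_trans hq1 hq0, fun _ => hmem⟩
    · exact ⟨p, le_refl _, fun h => absurd h hba⟩
  -- Step 2: put `a` into `G` if appropriate
  obtain ⟨q2, hq2, hq2G⟩ : ∃ q2 : Cond A b S, q2 ≤ q1 ∧ (a ∈ A ∧ a ≤ b → a ∈ q2.G) := by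
    by_cases hab : a ∈ A ∧ a ≤ b
    · obtain ⟨N, hN⟩ := hexc2 a hab.1 q1.F
        (fun u hu => ⟨(q1.hF u hu).1, le_trans hab.2 (q1.hF u hu).2⟩)
      obtain ⟨q0, hq0, hq0n, hq0F, hq0G, _⟩ := q1.raise N
      obtain ⟨q2, hq2, hmem⟩ := q0.addG a hab (by
        intro u hu m h1 h2
        rw [hq0F] at hu
        calc m < N := hN u hu m h1 h2
          _ ≤ q0.n := by rw [hq0n]; exact le_max_left _ _)
      exact ⟨q2, le_trans hq2 hq0, fun _ => hmem⟩
    · exact ⟨q1, le_refl _, fun h => absurd h hab⟩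
  -- Step 3: make the ceiling at least k
  obtain ⟨q3, hq3, hq3n⟩ : ∃ q3 : Cond A b S, q3 ≤ q2 ∧ k ≤ q3.n := by
    obtain ⟨q3, hq3, hq3n, _, _, _⟩ := q2.raise k
    exact ⟨q3, hq3, by rw [hq3n]; exact le_max_left _ _⟩
  -- Step 4: add a point of S a if a ⊓ b ≠ ⊥
  obtain ⟨q4, hq4, hq4pt⟩ : ∃ q4 : Cond A b S, q4 ≤ q3 ∧
      (a ∈ A ∧ a ⊓ b ≠ ⊥ → ∃ m : ℕ, k ≤ m ∧ m ∈ q4.s ∧ S a m) := by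
    by_cases hpos : a ∈ A ∧ a ⊓ b ≠ ⊥
    · have hFA : ∀ u ∈ q3.F, u ∈ A := fun u hu => (q3.hF u hu).1
      have hxA : a ⊓ q3.F.inf id ∈ A := hA.2.2.2.1 a hpos.1 _ (finsetInf_mem hA q3.F hFA)
      have hxle : a ⊓ b ≤ a ⊓ q3.F.inf id :=
        inf_le_inf_left a (Finset.le_inf (fun u hu => (q3.hF u hu).2))
      have hxne : a ⊓ q3.F.inf id ≠ ⊥ := fun hx => hpos.2 (le_bot_iff.mp (hx ▸ hxle))
      have hgerm : (↑(fun m => S a m ∧ ∀ u ∈ q3.F, S u m) : PomegaFin)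
          = ψ (a ⊓ q3.F.inf id) := by
        have hrfl : (↑(fun m => S a m ∧ ∀ u ∈ q3.F, S u m) : PomegaFin)
            = ↑(S a) ⊓ ↑(fun m => ∀ u ∈ q3.F, S u m) := rfl
        rw [hrfl, hS a, germ_finsetInf hA hψ S hS q3.F hFA,
          ← hψ.2.2.2.1 a hpos.1 _ (finsetInf_mem hA q3.F hFA)]
      have hinf : {m | S a m ∧ ∀ u ∈ q3.F, S u m}.Infinite := by
        rw [← germ_ne_bot_iff, hgerm]
        exact psi_ne_bot hA hψ hψinj hxA hxne
      obtain ⟨m, hm1, hm2⟩ := unbounded_of_infinite hinf (max k q3.n)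
      obtain ⟨q4, hq4, hq4m⟩ := q3.addPt m (le_trans (le_max_right _ _) hm1)
        (fun u hu => hm2.2 u hu)
      exact ⟨q4, hq4, fun _ => ⟨m, le_trans (le_max_left _ _) hm1, hq4m, hm2.1⟩⟩
    · exact ⟨q3, le_refl _, fun h => absurd h hpos⟩
  -- Step 5: exclude a point of S a if ¬ a ≤ b
  obtain ⟨q5, hq5, hq5neg⟩ : ∃ q5 : Cond A b S, q5 ≤ q4 ∧
      (a ∈ A ∧ ¬ a ≤ b → ∃ m : ℕ, k ≤ m ∧ m < q5.n ∧ S a m ∧ m ∉ q5.s) := by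
    by_cases hneg : a ∈ A ∧ ¬ a ≤ b
    · have hGA : ∀ g ∈ q4.G, g ∈ A := fun g hg => (q4.hG g hg).1
      have hsA : q4.G.sup id ∈ A := finsetSup_mem hA q4.G hGA
      have hxA : a ⊓ (q4.G.sup id)ᶜ ∈ A := hA.2.2.2.1 a hneg.1 _ (hA.2.2.2.2 _ hsA)
      have hble : q4.G.sup id ≤ b := Finset.sup_le (fun g hg => (q4.hG g hg).2)
      have hxle : a ⊓ bᶜ ≤ a ⊓ (q4.G.sup id)ᶜ := inf_le_inf_left a (compl_le_compl hble)
      have habne : a ⊓ bᶜ ≠ ⊥ := fun hx => hneg.2 (le_of_inf_compl_eq_bot hx)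
      have hxne : a ⊓ (q4.G.sup id)ᶜ ≠ ⊥ := fun hx => habne (le_bot_iff.mp (hx ▸ hxle))
      have hgerm : (↑(fun m => S a m ∧ ∀ g ∈ q4.G, ¬ S g m) : PomegaFin)
          = ψ (a ⊓ (q4.G.sup id)ᶜ) := by
        have h1 : (↑(fun m => S a m ∧ ∀ g ∈ q4.G, ¬ S g m) : PomegaFin)
            = ↑(fun m => S a m ∧ ¬ ∃ g ∈ q4.G, S g m) := by
          apply Filter.Germ.coe_eq.mpr
          exact Filter.Eventually.of_forall fun m => propext (by push_neg; rfl)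
        have h2 : (↑(fun m => S a m ∧ ¬ ∃ g ∈ q4.G, S g m) : PomegaFin)
            = ↑(S a) ⊓ (↑(fun m => ∃ g ∈ q4.G, S g m) : PomegaFin)ᶜ := rfl
        rw [h1, h2, hS a, germ_finsetSup hA hψ S hS q4.G hGA,
          ← hψ.2.2.2.2 _ hsA, ← hψ.2.2.2.1 a hneg.1 _ (hA.2.2.2.2 _ hsA)]
      have hinf : {m | S a m ∧ ∀ g ∈ q4.G, ¬ S g m}.Infinite := by
        rw [← germ_ne_bot_iff, hgerm]
        exact psi_ne_bot hA hψ hψinj hxA hxne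
      obtain ⟨m, hm1, hm2⟩ := unbounded_of_infinite hinf (max k q4.n)
      obtain ⟨q5, hq5, hq5n, hq5F, hq5G, hq5s⟩ := q4.raise (m + 1)
      refine ⟨q5, hq5, fun _ => ⟨m, le_trans (le_max_left _ _) hm1, ?_, hm2.1, ?_⟩⟩
      · rw [hq5n]
        exact lt_of_lt_of_le (Nat.lt_succ_self m) (le_max_left _ _)
      · rw [hq5s m]
        rintro (h | ⟨_, _, g, hg, hSg⟩)
        · exact absurd (q4.hs m h) (not_lt_of_ge (le_trans (le_max_right _ _) hm1))
        · exact hm2.2 g hg hSg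
    · exact ⟨q4, le_refl _, fun h => absurd h hneg⟩
  refine ⟨q5, ⟨?_, ?_, ?_, ?_, hq5neg⟩, le_trans hq5 (le_trans hq4 (le_trans hq3
    (le_trans hq2 hq1)))⟩
  · exact fun h => Cond.le_F hq5 (Cond.le_F hq4 (Cond.le_F hq3 (Cond.le_F hq2 (hq1F h))))
  · exact fun h => Cond.le_G hq5 (Cond.le_G hq4 (Cond.le_G hq3 (hq2G h)))
  · exact le_trans hq3n (le_trans (Cond.le_n hq4) (Cond.le_n hq5))
  · intro h
    obtain ⟨m, hm1, hm2, hm3⟩ := hq4pt h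
    exact ⟨m, hm1, Cond.le_pt hq5 hm2, hm3⟩
end Dense
theorem exists_sep (ma : MartinsAxiom) {B : Type} [BooleanAlgebra B] {A : Set B}
    (hA : IsBoolSubalgebra A) (hAcard : #A < Cardinal.continuum) (b : B)
    (hb : ({a ∈ A | a ≤ b}).Countable)
    (ψ : B → PomegaFin) (hψ : IsBAHomOn A ψ) (hψinj : Set.InjOn ψ A) :
    ∃ c : PomegaFin,
      (∀ a ∈ A, a ≤ b → ψ a ≤ c) ∧ (∀ a ∈ A, a ⊓ b = ⊥ → ψ a ⊓ c = ⊥) ∧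
      (∀ a ∈ A, a ⊓ b ≠ ⊥ → ψ a ⊓ c ≠ ⊥) ∧ (∀ a ∈ A, ¬ a ≤ b → ¬ ψ a ≤ c) := by
  classical
  set S : B → ℕ → Prop := fun x => Quotient.out (ψ x) with hSdef
  have hS : ∀ x, (↑(S x) : PomegaFin) = ψ x := fun x => Quotient.out_eq (ψ x)
  set 𝒟 : Set (Set (Cond A b S)) :=
    Set.range (fun x : ↥A × ℕ => Dset A b S (x.1 : B) x.2) with h𝒟
  have hcard : #𝒟 < Cardinal.continuum := by
    refine lt_of_le_of_lt Cardinal.mk_range_le ?_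
    rw [Cardinal.mk_prod, Cardinal.lift_id, Cardinal.lift_id, Cardinal.mk_nat]
    exact Cardinal.mul_lt_of_lt Cardinal.aleph0_le_continuum hAcard
      Cardinal.aleph0_lt_continuum
  obtain ⟨Gf, ⟨hGne, hGup, hGdir⟩, hGmeet⟩ := ma (Cond A b S) (cond_ccc hb) 𝒟
    (by rintro _ ⟨⟨a, k⟩, rfl⟩; exact cond_dense hA hψ hψinj hS (a : B) k) hcard
  have hmeet : ∀ a ∈ A, ∀ k : ℕ, ∃ p ∈ Gf, p ∈ Dset A b S a k := by
    intro a ha k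
    obtain ⟨p, hp1, hp2⟩ := hGmeet _ ⟨(⟨a, ha⟩, k), rfl⟩
    exact ⟨p, hp1, hp2⟩
  set C : ℕ → Prop := fun m => ∃ p ∈ Gf, m ∈ p.s with hC
  have fact_agree : ∀ p ∈ Gf, ∀ m : ℕ, m < p.n → (C m ↔ m ∈ p.s) := by
    intro p hp m hmn
    constructor
    · rintro ⟨q, hq, hqm⟩
      obtain ⟨r, hr, hrp, hrq⟩ := hGdir p hp q hq
      exact (hrp.2.2.2.1 m hmn).mp (Cond.le_pt hrq hqm)
    · intro h; exact ⟨p, hp, h⟩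
  have fact_new : ∀ p ∈ Gf, ∀ m : ℕ, C m → m ∉ p.s → ∀ u ∈ p.F, S u m := by
    rintro p hp m ⟨q, hq, hqm⟩ hm' u hu
    obtain ⟨r, hr, hrp, hrq⟩ := hGdir p hp q hq
    exact hrp.2.2.2.2.1 m (Cond.le_pt hrq hqm) hm' u hu
  have fact_forced : ∀ p ∈ Gf, ∀ g ∈ p.G, ∀ m : ℕ, p.n ≤ m → S g m → C m := by
    intro p hp g hg m hm hSg
    obtain ⟨p', hp', hp'D⟩ := hmeet ⊥ hA.1 (m + 1)
    obtain ⟨r, hr, hrp, hrp'⟩ := hGdir p hp p' hp'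
    have hmr : m < r.n :=
      lt_of_lt_of_le (lt_of_lt_of_le (Nat.lt_succ_self m) hp'D.2.2.1) (Cond.le_n hrp')
    exact ⟨r, hr, hrp.2.2.2.2.2 g hg m hm hmr hSg⟩
  refine ⟨↑C, ?_, ?_, ?_, ?_⟩
  · -- P1
    intro a ha hab
    obtain ⟨p, hp, hpD⟩ := hmeet a ha 0
    have hG : a ∈ p.G := hpD.2.1 ⟨ha, hab⟩
    rw [← hS a, germ_le_iff]
    refine (Set.finite_lt_nat p.n).subset ?_
    intro m ⟨h1, h2⟩
    by_contra hge
    exact h2 (fact_forced p hp a hG m (le_of_not_gt hge) h1)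
  · -- P2
    intro a ha hab
    have hbu : b ≤ aᶜ := by
      have := pairH1 a b
      rw [inf_comm b a, hab, bot_sup_eq] at this
      rw [← this]; exact inf_le_right
    have huA : aᶜ ∈ A := hA.2.2.2.2 a ha
    obtain ⟨p, hp, hpD⟩ := hmeet aᶜ huA 0
    have hF : aᶜ ∈ p.F := hpD.1 ⟨huA, hbu⟩
    have hcle : (↑C : PomegaFin) ≤ ψ aᶜ := by
      rw [← hS aᶜ, germ_le_iff]
      refine p.s.finite_toSet.subset ?_
      intro m ⟨h1, h2⟩
      by_contra hms
      exact h2 (fact_new p hp m h1 hms aᶜ hF)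
    have : ψ a ⊓ (↑C : PomegaFin) ≤ ψ a ⊓ (ψ a)ᶜ := by
      rw [← hψ.2.2.2.2 a ha]
      exact inf_le_inf_left _ hcle
    rw [inf_compl_eq_bot] at this
    exact le_bot_iff.mp this
  · -- P3
    intro a ha hab
    rw [← hS a]
    have hrfl : (↑(S a) ⊓ ↑C : PomegaFin) = ↑(fun m => S a m ∧ C m) := rfl
    rw [hrfl, germ_ne_bot_iff]
    apply infinite_of_unbounded
    intro k
    obtain ⟨p, hp, hpD⟩ := hmeet a ha k
    obtain ⟨m, hk, hms, hSa⟩ := hpD.2.2.2.1 ⟨ha, hab⟩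
    exact ⟨m, hk, hSa, ⟨p, hp, hms⟩⟩
  · -- P4
    intro a ha hab hle
    rw [← hS a, germ_le_iff] at hle
    refine infinite_of_unbounded (T := {n | S a n ∧ ¬ C n}) ?_ hle
    intro k
    obtain ⟨p, hp, hpD⟩ := hmeet a ha k
    obtain ⟨m, hk, hmn, hSa, hms⟩ := hpD.2.2.2.2 ⟨ha, hab⟩
    exact ⟨m, hk, hSa, fun hCm => hms ((fact_agree p hp m hmn).mp hCm)⟩
/-- The extension of `ψ` over `b`, determined by a separating element `c`. -/
noncomputable def extMap {B : Type} [BooleanAlgebra B] (A : Set B) (b : B)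
    (ψ : B → PomegaFin) (c : PomegaFin) : B → PomegaFin := fun x =>
  if h : ∃ a₁, a₁ ∈ A ∧ ∃ a₂, a₂ ∈ A ∧ x = (a₁ ⊓ b) ⊔ (a₂ ⊓ bᶜ) then
    (ψ h.choose ⊓ c) ⊔ (ψ h.choose_spec.2.choose ⊓ cᶜ)
  else ⊥

lemma extMap_spec {B : Type} [BooleanAlgebra B] {A : Set B} {b : B} {ψ : B → PomegaFin}
    {c : PomegaFin}
    (wd : ∀ a₁ ∈ A, ∀ a₂ ∈ A, ∀ a₁' ∈ A, ∀ a₂' ∈ A,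
      (a₁ ⊓ b) ⊔ (a₂ ⊓ bᶜ) = (a₁' ⊓ b) ⊔ (a₂' ⊓ bᶜ) →
      (ψ a₁ ⊓ c) ⊔ (ψ a₂ ⊓ cᶜ) = (ψ a₁' ⊓ c) ⊔ (ψ a₂' ⊓ cᶜ))
    {a₁ a₂ : B} (h₁ : a₁ ∈ A) (h₂ : a₂ ∈ A) :
    extMap A b ψ c ((a₁ ⊓ b) ⊔ (a₂ ⊓ bᶜ)) = (ψ a₁ ⊓ c) ⊔ (ψ a₂ ⊓ cᶜ) := by
  have hx : ∃ a₁', a₁' ∈ A ∧ ∃ a₂', a₂' ∈ A ∧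
      (a₁ ⊓ b) ⊔ (a₂ ⊓ bᶜ) = (a₁' ⊓ b) ⊔ (a₂' ⊓ bᶜ) := ⟨a₁, h₁, a₂, h₂, rfl⟩
  unfold extMap
  rw [dif_pos hx]
  exact wd _ hx.choose_spec.1 _ hx.choose_spec.2.choose_spec.1 _ h₁ _ h₂
    hx.choose_spec.2.choose_spec.2.symm

/-- Under `MA + ¬CH`, one-step extension of embeddings into `P(ω)/Fin`: an injective
homomorphism defined on a subalgebra `A` of size `< 𝔠` extends over any element `b`
such that `{a ∈ A : a ≤ b}` is countable. -/
theorem statement10 (ma : MartinsAxiom) (nch : Cardinal.aleph 1 < Cardinal.continuum)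
    (B : Type) [BooleanAlgebra B] (A : Set B) (hA : IsBoolSubalgebra A)
    (hAcard : #A < Cardinal.continuum) (b : B)
    (hb : ({a ∈ A | a ≤ b}).Countable)
    (ψ : B → PomegaFin) (hψ : IsBAHomOn A ψ) (hψinj : Set.InjOn ψ A) :
    ∃ φ : B → PomegaFin, IsBAHomOn (boolGen (A ∪ {b})) φ ∧
      Set.InjOn φ (boolGen (A ∪ {b})) ∧ Set.EqOn φ ψ A := by
  classical
  obtain ⟨c, P1, P2, P3, P4⟩ := exists_sep ma hA hAcard b hb ψ hψ hψinj
  have hgen : boolGen (A ∪ {b}) = pairSet A b := boolGen_eq_pairSet hA b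
  -- ψ of a ⊓ a'ᶜ
  have psidiff : ∀ a ∈ A, ∀ a' ∈ A, ψ (a ⊓ a'ᶜ) = ψ a ⊓ (ψ a')ᶜ := by
    intro a ha a' ha'
    rw [hψ.2.2.2.1 a ha a'ᶜ (hA.2.2.2.2 a' ha'), hψ.2.2.2.2 a' ha']
  -- difference elements are in A
  have diffA : ∀ a ∈ A, ∀ a' ∈ A, a ⊓ a'ᶜ ∈ A := fun a ha a' ha' =>
    hA.2.2.2.1 a ha a'ᶜ (hA.2.2.2.2 a' ha')
  -- complement side of P1 / P2
  have P1' : ∀ d ∈ A, d ⊓ bᶜ = ⊥ → ψ d ⊓ cᶜ = ⊥ := by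
    intro d hd h
    have hdb : d ≤ b := by
      have h2 := pairH1 b d
      rw [h, sup_bot_eq] at h2
      rw [← h2]; exact inf_le_right
    exact st10_inf_compl_eq_bot (P1 d hd hdb)
  -- halves of well-definedness
  have sub1 : ∀ a ∈ A, ∀ a' ∈ A, a ⊓ b = a' ⊓ b → ψ a ⊓ c = (ψ a ⊓ ψ a') ⊓ c := by
    intro a ha a' ha' h
    have hd : (a ⊓ a'ᶜ) ⊓ b = ⊥ := by
      rw [show (a ⊓ a'ᶜ) ⊓ b = (a ⊓ b) ⊓ a'ᶜ by ac_rfl, h,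
        show (a' ⊓ b) ⊓ a'ᶜ = (a' ⊓ a'ᶜ) ⊓ b by ac_rfl, inf_compl_eq_bot, bot_inf_eq]
    have hP := P2 _ (diffA a ha a' ha') hd
    rw [psidiff a ha a' ha'] at hP
    calc ψ a ⊓ c = ((ψ a ⊓ ψ a') ⊔ (ψ a ⊓ (ψ a')ᶜ)) ⊓ c := by rw [pairH1 (ψ a') (ψ a)]
      _ = ((ψ a ⊓ ψ a') ⊓ c) ⊔ ((ψ a ⊓ (ψ a')ᶜ) ⊓ c) := inf_sup_right _ _ _
      _ = (ψ a ⊓ ψ a') ⊓ c := by rw [hP, sup_bot_eq]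
  have half1 : ∀ a ∈ A, ∀ a' ∈ A, a ⊓ b = a' ⊓ b → ψ a ⊓ c = ψ a' ⊓ c := by
    intro a ha a' ha' h
    rw [sub1 a ha a' ha' h, sub1 a' ha' a ha h.symm, inf_comm (ψ a') (ψ a)]
  have sub2 : ∀ a ∈ A, ∀ a' ∈ A, a ⊓ bᶜ = a' ⊓ bᶜ → ψ a ⊓ cᶜ = (ψ a ⊓ ψ a') ⊓ cᶜ := by
    intro a ha a' ha' h
    have hd : (a ⊓ a'ᶜ) ⊓ bᶜ = ⊥ := by
      rw [show (a ⊓ a'ᶜ) ⊓ bᶜ = (a ⊓ bᶜ) ⊓ a'ᶜ by ac_rfl, h,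
        show (a' ⊓ bᶜ) ⊓ a'ᶜ = (a' ⊓ a'ᶜ) ⊓ bᶜ by ac_rfl, inf_compl_eq_bot, bot_inf_eq]
    have hP := P1' _ (diffA a ha a' ha') hd
    rw [psidiff a ha a' ha'] at hP
    calc ψ a ⊓ cᶜ = ((ψ a ⊓ ψ a') ⊔ (ψ a ⊓ (ψ a')ᶜ)) ⊓ cᶜ := by rw [pairH1 (ψ a') (ψ a)]
      _ = ((ψ a ⊓ ψ a') ⊓ cᶜ) ⊔ ((ψ a ⊓ (ψ a')ᶜ) ⊓ cᶜ) := inf_sup_right _ _ _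
      _ = (ψ a ⊓ ψ a') ⊓ cᶜ := by rw [hP, sup_bot_eq]
  have half2 : ∀ a ∈ A, ∀ a' ∈ A, a ⊓ bᶜ = a' ⊓ bᶜ → ψ a ⊓ cᶜ = ψ a' ⊓ cᶜ := by
    intro a ha a' ha' h
    rw [sub2 a ha a' ha' h, sub2 a' ha' a ha h.symm, inf_comm (ψ a') (ψ a)]
  have wd : ∀ a₁ ∈ A, ∀ a₂ ∈ A, ∀ a₁' ∈ A, ∀ a₂' ∈ A,
      (a₁ ⊓ b) ⊔ (a₂ ⊓ bᶜ) = (a₁' ⊓ b) ⊔ (a₂' ⊓ bᶜ) →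
      (ψ a₁ ⊓ c) ⊔ (ψ a₂ ⊓ cᶜ) = (ψ a₁' ⊓ c) ⊔ (ψ a₂' ⊓ cᶜ) := by
    intro a₁ h₁ a₂ h₂ a₁' h₁' a₂' h₂' h
    obtain ⟨e1, e2⟩ := (pairEq b).mp h
    rw [half1 a₁ h₁ a₁' h₁' e1, half2 a₂ h₂ a₂' h₂' e2]
  set φ : B → PomegaFin := extMap A b ψ c with hφ
  have spec : ∀ a₁ ∈ A, ∀ a₂ ∈ A,
      φ ((a₁ ⊓ b) ⊔ (a₂ ⊓ bᶜ)) = (ψ a₁ ⊓ c) ⊔ (ψ a₂ ⊓ cᶜ) :=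
    fun a₁ h₁ a₂ h₂ => extMap_spec wd h₁ h₂
  -- membership unpacking
  have unpack : ∀ x ∈ boolGen (A ∪ {b}), ∃ a₁ ∈ A, ∃ a₂ ∈ A,
      x = (a₁ ⊓ b) ⊔ (a₂ ⊓ bᶜ) := by
    intro x hx
    rw [hgen] at hx
    exact hx
  refine ⟨φ, ⟨?_, ?_, ?_, ?_, ?_⟩, ?_, ?_⟩
  · -- φ ⊥ = ⊥
    have h1 : (⊥ : B) = (⊥ ⊓ b) ⊔ (⊥ ⊓ bᶜ) := by simp
    rw [h1, spec ⊥ hA.1 ⊥ hA.1, hψ.1]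
    simp
  · -- φ ⊤ = ⊤
    have h1 : (⊤ : B) = (⊤ ⊓ b) ⊔ (⊤ ⊓ bᶜ) := (pairH1 b ⊤).symm
    rw [h1, spec ⊤ hA.2.1 ⊤ hA.2.1, hψ.2.1, top_inf_eq, top_inf_eq, sup_compl_eq_top]
  · -- sup
    intro x hx y hy
    obtain ⟨a₁, h₁, a₂, h₂, rfl⟩ := unpack x hx
    obtain ⟨a₁', h₁', a₂', h₂', rfl⟩ := unpack y hy
    rw [pairSup b, spec _ (hA.2.2.1 _ h₁ _ h₁') _ (hA.2.2.1 _ h₂ _ h₂'),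
      spec _ h₁ _ h₂, spec _ h₁' _ h₂',
      hψ.2.2.1 _ h₁ _ h₁', hψ.2.2.1 _ h₂ _ h₂', pairSup c]
  · -- inf
    intro x hx y hy
    obtain ⟨a₁, h₁, a₂, h₂, rfl⟩ := unpack x hx
    obtain ⟨a₁', h₁', a₂', h₂', rfl⟩ := unpack y hy
    rw [pairInf b, spec _ (hA.2.2.2.1 _ h₁ _ h₁') _ (hA.2.2.2.1 _ h₂ _ h₂'),
      spec _ h₁ _ h₂, spec _ h₁' _ h₂',
      hψ.2.2.2.1 _ h₁ _ h₁', hψ.2.2.2.1 _ h₂ _ h₂', pairInf c]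
  · -- compl
    intro x hx
    obtain ⟨a₁, h₁, a₂, h₂, rfl⟩ := unpack x hx
    rw [pairCompl b, spec _ (hA.2.2.2.2 _ h₁) _ (hA.2.2.2.2 _ h₂),
      spec _ h₁ _ h₂, hψ.2.2.2.2 _ h₁, hψ.2.2.2.2 _ h₂, pairCompl c]
  · -- injectivity
    intro x hx y hy heq
    obtain ⟨a₁, h₁, a₂, h₂, rfl⟩ := unpack x hx
    obtain ⟨a₁', h₁', a₂', h₂', rfl⟩ := unpack y hy
    rw [spec _ h₁ _ h₂, spec _ h₁' _ h₂'] at heq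
    obtain ⟨e1, e2⟩ := (pairEq c).mp heq
    -- first components agree on b
    have side1 : ∀ v ∈ A, ∀ w ∈ A, ψ v ⊓ c = ψ w ⊓ c → v ⊓ b ≤ w ⊓ b := by
      intro v hv w hw he
      have hd : (v ⊓ wᶜ) ⊓ b = ⊥ := by
        by_contra hne
        apply P3 _ (diffA v hv w hw) hne
        rw [psidiff v hv w hw,
          show (ψ v ⊓ (ψ w)ᶜ) ⊓ c = (ψ v ⊓ c) ⊓ (ψ w)ᶜ by ac_rfl, he,
          show (ψ w ⊓ c) ⊓ (ψ w)ᶜ = (ψ w ⊓ (ψ w)ᶜ) ⊓ c by ac_rfl,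
          inf_compl_eq_bot, bot_inf_eq]
      have hvb : v ⊓ b = (v ⊓ w) ⊓ b := by
        have h2 := pairH1 w (v ⊓ b)
        rw [show (v ⊓ b) ⊓ wᶜ = (v ⊓ wᶜ) ⊓ b by ac_rfl, hd, sup_bot_eq] at h2
        rw [← h2]; ac_rfl
      rw [hvb]
      exact inf_le_inf_right b inf_le_right
    have side2 : ∀ v ∈ A, ∀ w ∈ A, ψ v ⊓ cᶜ = ψ w ⊓ cᶜ → v ⊓ bᶜ ≤ w ⊓ bᶜ := by
      intro v hv w hw he
      have hd : (v ⊓ wᶜ) ⊓ bᶜ = ⊥ := by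
        by_contra hne
        have hnleb : ¬ (v ⊓ wᶜ) ≤ b := fun hle => hne (st10_inf_compl_eq_bot hle)
        apply P4 _ (diffA v hv w hw) hnleb
        apply le_of_inf_compl_eq_bot
        rw [psidiff v hv w hw,
          show (ψ v ⊓ (ψ w)ᶜ) ⊓ cᶜ = (ψ v ⊓ cᶜ) ⊓ (ψ w)ᶜ by ac_rfl, he,
          show (ψ w ⊓ cᶜ) ⊓ (ψ w)ᶜ = (ψ w ⊓ (ψ w)ᶜ) ⊓ cᶜ by ac_rfl,
          inf_compl_eq_bot, bot_inf_eq]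
      have hvb : v ⊓ bᶜ = (v ⊓ w) ⊓ bᶜ := by
        have h2 := pairH1 w (v ⊓ bᶜ)
        rw [show (v ⊓ bᶜ) ⊓ wᶜ = (v ⊓ wᶜ) ⊓ bᶜ by ac_rfl, hd, sup_bot_eq] at h2
        rw [← h2]; ac_rfl
      rw [hvb]
      exact inf_le_inf_right bᶜ inf_le_right
    apply (pairEq b).mpr
    constructor
    · exact le_antisymm (side1 _ h₁ _ h₁' e1) (side1 _ h₁' _ h₁ e1.symm)
    · exact le_antisymm (side2 _ h₂ _ h₂' e2) (side2 _ h₂' _ h₂ e2.symm)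
  · -- agreement with ψ on A
    intro a ha
    show φ a = ψ a
    have h1 : a = (a ⊓ b) ⊔ (a ⊓ bᶜ) := (pairH1 b a).symm
    rw [h1, spec a ha a ha, pairH1 c (ψ a)]
    rw [← h1]
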